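/- Let X be a random variable with mean 0 and variance 1, c ∈ ℝ, and p := P(X ≤ c). Then E[min(X, c)] ≥ −√(p − p²) + c·(1 − p). -/

import Mathlib

open MeasureTheory

theorem expectation_min_ge_L
    {Ω : Type*} [MeasurableSpace Ω] (μ : Measure Ω) [IsProbabilityMeasure μ]
    (X : Ω → ℝ) (c : ℝ)
    (hX2 : MemLp X 2 μ)
    (hmean : ∫ ω, X ω ∂μ = 0)
    (hvar : ∫ ω, (X ω) ^ 2 ∂μ = 1) :
    -Real.sqrt ((μ {ω | X ω ≤ c}).toReal - (μ {ω | X ω ≤ c}).toReal ^ 2)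
        + c * (1 - (μ {ω | X ω ≤ c}).toReal)
      ≤ ∫ ω, min (X ω) c ∂μ := by
  -- pass to a measurable representative
  set Y : Ω → ℝ := hX2.aestronglyMeasurable.mk X with hYdef
  have hXY : X =ᵐ[μ] Y := hX2.aestronglyMeasurable.ae_eq_mk
  have hYm : Measurable Y := hX2.aestronglyMeasurable.stronglyMeasurable_mk.measurable
  have hY2 : MemLp Y 2 μ := hX2.ae_eq hXY
  have hmeanY : ∫ ω, Y ω ∂μ = 0 := by
    rw [← integral_congr_ae hXY]; exact hmean
  have hvarY : ∫ ω, (Y ω) ^ 2 ∂μ = 1 := by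
    rw [← integral_congr_ae (hXY.mono fun ω h => show X ω ^ 2 = Y ω ^ 2 by rw [h])]
    exact hvar
  have hset : {ω | X ω ≤ c} =ᵐ[μ] {ω | Y ω ≤ c} := by
    filter_upwards [hXY] with ω h
    show (X ω ≤ c) = (Y ω ≤ c)
    rw [h]
  have hμset : μ {ω | X ω ≤ c} = μ {ω | Y ω ≤ c} := measure_congr hset
  have hintmin : ∫ ω, min (X ω) c ∂μ = ∫ ω, min (Y ω) c ∂μ :=
    integral_congr_ae (hXY.mono fun ω h => show min (X ω) c = min (Y ω) c by rw [h])
  rw [hμset, hintmin]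
  -- setup
  set A : Set Ω := {ω | Y ω ≤ c} with hAdef
  have hA : MeasurableSet A := measurableSet_le hYm measurable_const
  set p : ℝ := (μ A).toReal with hpdef
  set I : Ω → ℝ := A.indicator (fun _ => (1:ℝ)) with hIdef
  have hIm : Measurable I := measurable_const.indicator hA
  have hIint : Integrable I μ := (integrable_const (1:ℝ)).indicator hA
  have h_int_I : ∫ ω, I ω ∂μ = p := by
    rw [hIdef, integral_indicator_const _ hA]; simp [hpdef, Measure.real]
  have hYint : Integrable Y μ := hY2.integrable one_le_two
  have hYsq : Integrable (fun ω => Y ω ^ 2) μ := hY2.integrable_sq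
  have hIbd : ∀ ω, |I ω| ≤ 1 := by
    intro ω
    rw [hIdef, Set.indicator_apply]
    split_ifs <;> norm_num
  have hYI : Integrable (fun ω => Y ω * I ω) μ := by
    refine hYint.mono ((hYm.mul hIm).aestronglyMeasurable) (ae_of_all _ fun ω => ?_)
    simp only [norm_mul, Real.norm_eq_abs]
    calc |Y ω| * |I ω| ≤ |Y ω| * 1 := by
            exact mul_le_mul_of_nonneg_left (hIbd ω) (abs_nonneg _)
      _ = |Y ω| := mul_one _
  set g : Ω → ℝ := fun ω => Y ω * (I ω - p) with hgdef
  have hgint : Integrable g μ := by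
    have : g = fun ω => Y ω * I ω - p * Y ω := by
      funext ω; rw [hgdef]; ring
    rw [this]
    exact hYI.sub (hYint.const_mul p)
  have h_int_g : ∫ ω, g ω ∂μ = ∫ ω, Y ω * I ω ∂μ := by
    have : g = fun ω => Y ω * I ω - p * Y ω := by
      funext ω; rw [hgdef]; ring
    rw [this, integral_sub hYI (hYint.const_mul p), integral_const_mul, hmeanY]
    ring
  -- indicator squared facts
  have hIsq : ∀ ω, (I ω - p) ^ 2 = (1 - 2 * p) * I ω + p ^ 2 := by
    intro ω
    rw [hIdef, Set.indicator_apply]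
    split_ifs <;> ring
  have hsq_int : Integrable (fun ω => (I ω - p) ^ 2) μ := by
    have : (fun ω => (I ω - p) ^ 2) = fun ω => (1 - 2 * p) * I ω + p ^ 2 := by
      funext ω; exact hIsq ω
    rw [this]
    exact (hIint.const_mul _).add (integrable_const _)
  have h_int_sq : ∫ ω, (I ω - p) ^ 2 ∂μ = p - p ^ 2 := by
    calc ∫ ω, (I ω - p) ^ 2 ∂μ = ∫ ω, ((1 - 2 * p) * I ω + p ^ 2) ∂μ := by
          exact integral_congr_ae (ae_of_all _ hIsq)
      _ = (1 - 2 * p) * p + p ^ 2 := by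
          rw [integral_add (hIint.const_mul _) (integrable_const _),
            integral_const_mul, h_int_I, integral_const]
          simp
      _ = p - p ^ 2 := by ring
  have hq0 : 0 ≤ p - p ^ 2 := by
    rw [← h_int_sq]
    exact integral_nonneg fun ω => sq_nonneg _
  -- key: for all t > 0
  have hkey : ∀ t : ℝ, 0 < t → -((t + (p - p ^ 2) / t) / 2) ≤ ∫ ω, g ω ∂μ := by
    intro t ht
    have hle : ∀ ω, -(t / 2) * Y ω ^ 2 + (-(1 / (2 * t))) * (I ω - p) ^ 2 ≤ g ω := by
      intro ω
      show -(t / 2) * Y ω ^ 2 + (-(1 / (2 * t))) * (I ω - p) ^ 2 ≤ Y ω * (I ω - p)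
      set a := Y ω
      set b := I ω - p
      have h2 : (0:ℝ) < 2 * t := by linarith
      have heq : a * b - (-(t / 2) * a ^ 2 + (-(1 / (2 * t))) * b ^ 2)
          = (t * a + b) ^ 2 / (2 * t) := by
        field_simp
        ring
      linarith [heq, div_nonneg (sq_nonneg (t * a + b)) h2.le]
    have hint1 : Integrable (fun ω => -(t / 2) * Y ω ^ 2 + (-(1 / (2 * t))) * (I ω - p) ^ 2) μ :=
      (hYsq.const_mul _).add (hsq_int.const_mul _)
    have := integral_mono hint1 hgint hle
    rw [integral_add (hYsq.const_mul _) (hsq_int.const_mul _), integral_const_mul,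
      integral_const_mul, hvarY, h_int_sq] at this
    have ht' : t ≠ 0 := ne_of_gt ht
    calc -((t + (p - p ^ 2) / t) / 2)
        = -(t / 2) * 1 + (-(1 / (2 * t))) * (p - p ^ 2) := by field_simp; ring
      _ ≤ ∫ ω, g ω ∂μ := this
  have hE : -Real.sqrt (p - p ^ 2) ≤ ∫ ω, g ω ∂μ := by
    rcases eq_or_lt_of_le hq0 with h0 | hpos
    · rw [← h0, Real.sqrt_zero]
      by_contra h
      push_neg at h
      have := hkey (-(∫ ω, g ω ∂μ)) (by linarith)
      rw [← h0] at this
      simp at this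
      linarith
    · have := hkey (Real.sqrt (p - p ^ 2)) (Real.sqrt_pos.mpr hpos)
      rwa [Real.div_sqrt, ← two_mul, mul_div_cancel_left₀ _ (two_ne_zero)] at this
  -- decompose the min integral
  have hmin_eq : ∀ ω, min (Y ω) c = Y ω * I ω + c * (1 - I ω) := by
    intro ω
    by_cases h : Y ω ≤ c
    · have : I ω = 1 := by rw [hIdef]; exact Set.indicator_of_mem (show ω ∈ A from h) _
      rw [this, min_eq_left h]; ring
    · have : I ω = 0 := by rw [hIdef]; exact Set.indicator_of_notMem (show ω ∉ A from h) _
      rw [this, min_eq_right (le_of_not_ge h)]; ring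
  have hc_int : Integrable (fun ω => c * (1 - I ω)) μ :=
    ((integrable_const (1:ℝ)).sub hIint).const_mul c
  have h_int_min : ∫ ω, min (Y ω) c ∂μ = (∫ ω, g ω ∂μ) + c * (1 - p) := by
    calc ∫ ω, min (Y ω) c ∂μ
        = ∫ ω, (Y ω * I ω + c * (1 - I ω)) ∂μ := integral_congr_ae (ae_of_all _ hmin_eq)
      _ = (∫ ω, Y ω * I ω ∂μ) + c * (1 - p) := by
          rw [integral_add hYI hc_int, integral_const_mul,
            integral_sub (integrable_const _) hIint, h_int_I, integral_const]
          simp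
      _ = (∫ ω, g ω ∂μ) + c * (1 - p) := by rw [h_int_g]
  rw [h_int_min]
  linarith [hE]
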